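/- (Lower bound, Case 1 inequality) For any c > 0 there exists T₀ such that for all T ≥ T₀ the following holds: if a learner plays w_1,…,w_T ∈ ℝ with w_t < (1/2)·exp(T^{1/2}/(4·log(2)·c)) for all t, and the losses are g_t = −1 for all t, then with u = exp(T^{1/2}/(4·log(2)·c)) the regret satisfies ∑_{t=1}^T g_t(w_t − u) ≥ (T/2)·u = c·u·log(u)·√T·log 2 + (T/4)·exp(T^{1/2}/(4·log(2)·c)). -/

import Mathlib

open Finset

/-- Lower bound, Case 1 inequality from the proof of Theorem 1. -/
theorem stmt17 (c : ℝ) (hc : 0 < c) :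
    ∃ T₀ : ℕ, ∀ T : ℕ, T₀ ≤ T → ∀ w : ℕ → ℝ,
      (∀ t ∈ Icc 1 T, w t < 1 / 2 * Real.exp (Real.sqrt T / (4 * Real.log 2 * c))) →
      (T / 2 : ℝ) * Real.exp (Real.sqrt T / (4 * Real.log 2 * c)) ≤
          ∑ t ∈ Icc 1 T, (-1 : ℝ) * (w t - Real.exp (Real.sqrt T / (4 * Real.log 2 * c))) ∧
      (T / 2 : ℝ) * Real.exp (Real.sqrt T / (4 * Real.log 2 * c)) =
        c * Real.exp (Real.sqrt T / (4 * Real.log 2 * c)) *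
            Real.log (Real.exp (Real.sqrt T / (4 * Real.log 2 * c))) *
            Real.sqrt T * Real.log 2 +
          (T / 4 : ℝ) * Real.exp (Real.sqrt T / (4 * Real.log 2 * c)) := by
  refine ⟨0, fun T _ w hw => ?_⟩
  set u := Real.exp (Real.sqrt T / (4 * Real.log 2 * c)) with hu
  constructor
  · have h : ∀ t ∈ Icc 1 T, (1 / 2 : ℝ) * u ≤ (-1 : ℝ) * (w t - u) := by
      intro t ht
      have := hw t ht
      nlinarith
    calc (T / 2 : ℝ) * u = ∑ t ∈ Icc 1 T, (1 / 2 : ℝ) * u := by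
          rw [Finset.sum_const, Nat.card_Icc]
          push_cast [Nat.add_sub_cancel]
          ring
      _ ≤ _ := Finset.sum_le_sum h
  · rw [hu, Real.log_exp]
    have hlog : (0 : ℝ) < Real.log 2 := Real.log_pos (by norm_num)
    have hsq : Real.sqrt T * Real.sqrt T = (T : ℝ) :=
      Real.mul_self_sqrt (Nat.cast_nonneg T)
    rw [show c * u * (Real.sqrt T / (4 * Real.log 2 * c)) * Real.sqrt T * Real.log 2
        = (Real.sqrt T * Real.sqrt T) * (c * Real.log 2 / (4 * Real.log 2 * c)) * u by ring,
      hsq]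
    field_simp
    ring
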